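/- Consider the matrix ODE along a curve: for continuous functions f, g : [0,1] → ℂ and a parameter t ∈ ℂ, let X(s,t) ∈ Matrix (fin 2) (Fin 2) ℂ solve ∂ₛX(s,t) = X(s,t)·[[0, t·f(s)],[g(s), 0]] with X(0,t) = Id. Assume X is twice continuously differentiable jointly in (s,t). Then the derivative of t ↦ X(1,t) at t = 0 equals the matrix [[ ∫₀¹ g(s)·(∫₀ˢ f(u) du) ds , ∫₀¹ f(s) ds ],[ ∫₀¹ g(s)·(∫₀ˢ f(u)·(∫₀ᵘ g(v) dv) du) ds , ∫₀¹ f(s)·(∫₀ˢ g(v) dv) ds ]]. -/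

import Mathlib

attribute [local instance] Matrix.normedAddCommGroup Matrix.normedSpace

open MeasureTheory Set Metric intervalIntegral

set_option maxHeartbeats 1000000
set_option synthInstance.maxHeartbeats 400000

noncomputable def eCLM (i j : Fin 2) : Matrix (Fin 2) (Fin 2) ℂ →L[ℝ] ℂ :=
  LinearMap.toContinuousLinearMap (Matrix.entryLinearMap ℝ ℂ i j)

@[simp] lemma eCLM_apply (i j : Fin 2) (M : Matrix (Fin 2) (Fin 2) ℂ) : eCLM i j M = M i j := rfl

lemma uniqueDiffOn_S : UniqueDiffOn ℝ (Set.Icc (0:ℝ) 1 ×ˢ (Set.univ : Set ℂ)) :=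
  (uniqueDiffOn_Icc zero_lt_one).prod uniqueDiffOn_univ

lemma hasFDerivAt_slice {φ : ℝ × ℂ → ℂ} (hφ : ContDiffOn ℝ 2 φ (Set.Icc (0:ℝ) 1 ×ˢ Set.univ))
    {u : ℝ} (hu : u ∈ Set.Icc (0:ℝ) 1) (t : ℂ) :
    HasFDerivAt (fun t' => φ (u, t'))
      ((fderivWithin ℝ φ (Set.Icc (0:ℝ) 1 ×ˢ Set.univ) (u, t)).comp
        (ContinuousLinearMap.inr ℝ ℝ ℂ)) t := by
  have hmem : ((u, t) : ℝ × ℂ) ∈ Set.Icc (0:ℝ) 1 ×ˢ (Set.univ : Set ℂ) := ⟨hu, mem_univ _⟩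
  have h1 := ((hφ.differentiableOn (by norm_num)) _ hmem).hasFDerivWithinAt
  have h2 : HasFDerivAt (fun t' : ℂ => ((u, t') : ℝ × ℂ)) (ContinuousLinearMap.inr ℝ ℝ ℂ) t :=
    hasFDerivAt_prodMk_right u t
  have h3 := h1.comp t (h2.hasFDerivWithinAt (s := Set.univ))
    (fun y _ => ⟨hu, mem_univ _⟩)
  rw [hasFDerivWithinAt_univ] at h3
  exact h3

/-- The first `t`-derivative of the monodromy `t ↦ X(1,t)` at `t = 0`, given entrywise by
iterated integrals (from the proof of Lemma 2.5). -/
theorem first_derivative_of_monodromy (f g : ℝ → ℂ)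
    (hf : ContinuousOn f (Set.Icc 0 1)) (hg : ContinuousOn g (Set.Icc 0 1))
    (X : ℝ × ℂ → Matrix (Fin 2) (Fin 2) ℂ)
    (hX : ContDiffOn ℝ 2 X (Set.Icc (0:ℝ) 1 ×ˢ Set.univ))
    (hode : ∀ t : ℂ, ∀ s ∈ Set.Icc (0:ℝ) 1,
      HasDerivWithinAt (fun s' => X (s', t)) (X (s, t) * !![0, t * f s; g s, 0])
        (Set.Icc (0:ℝ) 1) s)
    (hinit : ∀ t : ℂ, X (0, t) = 1) :
    HasDerivAt (fun t : ℂ => X (1, t))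
      !![∫ s in (0:ℝ)..1, g s * ∫ u in (0:ℝ)..s, f u,
           ∫ s in (0:ℝ)..1, f s;
         ∫ s in (0:ℝ)..1, g s * ∫ u in (0:ℝ)..s, f u * ∫ v in (0:ℝ)..u, g v,
           ∫ s in (0:ℝ)..1, f s * ∫ v in (0:ℝ)..s, g v]
      (0 : ℂ) := by
  have hxC : ∀ i j : Fin 2, ContDiffOn ℝ 2 (fun p => X p i j)
      (Set.Icc (0:ℝ) 1 ×ˢ Set.univ) := fun i j => (eCLM i j).contDiff.comp_contDiffOn hX
  -- continuity of slices
  have hXcont : ∀ (t : ℂ) (i j : Fin 2),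
      ContinuousOn (fun u => X (u, t) i j) (Set.Icc (0:ℝ) 1) := by
    intro t i j
    exact ((hxC i j).continuousOn).comp
      ((continuous_id.prodMk continuous_const).continuousOn)
      (fun u hu => ⟨hu, mem_univ _⟩)
  -- entrywise ODE
  have hodeE : ∀ (t : ℂ) (i : Fin 2), ∀ s ∈ Set.Icc (0:ℝ) 1,
      HasDerivWithinAt (fun s' => X (s', t) i 0) (X (s, t) i 1 * g s) (Set.Icc (0:ℝ) 1) s ∧
      HasDerivWithinAt (fun s' => X (s', t) i 1) (X (s, t) i 0 * (t * f s))
        (Set.Icc (0:ℝ) 1) s := by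
    intro t i s hs
    have h := hode t s hs
    constructor
    · have h0 := (eCLM i 0).hasFDerivAt.comp_hasDerivWithinAt s h
      have : eCLM i 0 (X (s, t) * !![0, t * f s; g s, 0]) = X (s, t) i 1 * g s := by
        simp [Matrix.mul_apply, Fin.sum_univ_two]
      exact h0.congr_deriv this
    · have h1 := (eCLM i 1).hasFDerivAt.comp_hasDerivWithinAt s h
      have : eCLM i 1 (X (s, t) * !![0, t * f s; g s, 0]) = X (s, t) i 0 * (t * f s) := by
        simp [Matrix.mul_apply, Fin.sum_univ_two]
      exact h1.congr_deriv this
  -- membership helper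
  have hnhds : ∀ u ∈ Set.Ico (0:ℝ) 1, Set.Icc (0:ℝ) 1 ∈ nhdsWithin u (Set.Ioi u) := by
    intro u hu
    rw [mem_nhdsWithin]
    exact ⟨Set.Iio 1, isOpen_Iio, hu.2, fun y hy => ⟨le_of_lt (lt_of_le_of_lt hu.1 hy.2),
      le_of_lt hy.1⟩⟩
  -- FTC: integral form of the ODE
  have ftc : ∀ (t : ℂ) (i : Fin 2), ∀ s ∈ Set.Icc (0:ℝ) 1,
      (X (s, t) i 0 = (1 : Matrix (Fin 2) (Fin 2) ℂ) i 0
          + ∫ u in (0:ℝ)..s, X (u, t) i 1 * g u) ∧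
      (X (s, t) i 1 = (1 : Matrix (Fin 2) (Fin 2) ℂ) i 1
          + ∫ u in (0:ℝ)..s, X (u, t) i 0 * (t * f u)) := by
    intro t i s hs
    have hsub : Set.Icc (0:ℝ) s ⊆ Set.Icc (0:ℝ) 1 := Set.Icc_subset_Icc_right hs.2
    constructor
    · have h := intervalIntegral.integral_eq_sub_of_hasDeriv_right_of_le hs.1
        (((hXcont t i 0)).mono hsub)
        (fun u hu => ((hodeE t i u ⟨le_of_lt hu.1, le_trans (le_of_lt hu.2) hs.2⟩).1).mono_of_mem_nhdsWithin
          (hnhds u ⟨le_of_lt hu.1, lt_of_lt_of_le hu.2 hs.2⟩))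
        ((((hXcont t i 1).mono hsub).mul (hg.mono hsub)).intervalIntegrable_of_Icc hs.1)
      rw [h, hinit t]
      ring
    · have h := intervalIntegral.integral_eq_sub_of_hasDeriv_right_of_le hs.1
        (((hXcont t i 1)).mono hsub)
        (fun u hu => ((hodeE t i u ⟨le_of_lt hu.1, le_trans (le_of_lt hu.2) hs.2⟩).2).mono_of_mem_nhdsWithin
          (hnhds u ⟨le_of_lt hu.1, lt_of_lt_of_le hu.2 hs.2⟩))
        ((((hXcont t i 0).mono hsub).mul
          (continuousOn_const.mul (hf.mono hsub))).intervalIntegrable_of_Icc hs.1)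
      rw [h, hinit t]
      ring
  -- values at t = 0
  have hA1 : ∀ (i : Fin 2), ∀ s ∈ Set.Icc (0:ℝ) 1,
      X (s, (0:ℂ)) i 1 = (1 : Matrix (Fin 2) (Fin 2) ℂ) i 1 := by
    intro i s hs
    have := (ftc 0 i s hs).2
    simpa using this
  have hA00 : ∀ s ∈ Set.Icc (0:ℝ) 1, X (s, (0:ℂ)) 0 0 = 1 := by
    intro s hs
    have h := (ftc 0 0 s hs).1
    have hcongr : ∀ u ∈ Set.uIcc (0:ℝ) s, X (u, (0:ℂ)) 0 1 * g u = 0 := by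
      intro u hu
      rw [Set.uIcc_of_le hs.1] at hu
      rw [hA1 0 u (Set.Icc_subset_Icc_right hs.2 hu)]
      simp
    rw [intervalIntegral.integral_congr hcongr] at h
    simpa using h
  have hA10 : ∀ s ∈ Set.Icc (0:ℝ) 1, X (s, (0:ℂ)) 1 0 = ∫ v in (0:ℝ)..s, g v := by
    intro s hs
    have h := (ftc 0 1 s hs).1
    have hcongr : ∀ u ∈ Set.uIcc (0:ℝ) s, X (u, (0:ℂ)) 1 1 * g u = g u := by
      intro u hu
      rw [Set.uIcc_of_le hs.1] at hu
      rw [hA1 1 u (Set.Icc_subset_Icc_right hs.2 hu)]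
      simp
    rw [intervalIntegral.integral_congr hcongr] at h
    simpa using h
  -- the partial t-derivative operators
  set L : Fin 2 → Fin 2 → ℝ × ℂ → (ℂ →L[ℝ] ℂ) := fun i j p =>
    (fderivWithin ℝ (fun q => X q i j) (Set.Icc (0:ℝ) 1 ×ˢ Set.univ) p).comp
      (ContinuousLinearMap.inr ℝ ℝ ℂ) with hLdef
  have hpart : ∀ (i j : Fin 2) (u : ℝ), u ∈ Set.Icc (0:ℝ) 1 → ∀ t : ℂ,
      HasFDerivAt (fun t' => X (u, t') i j) (L i j (u, t)) t :=
    fun i j u hu t => hasFDerivAt_slice (hxC i j) hu t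
  have hLcont : ∀ i j : Fin 2, ContinuousOn (L i j) (Set.Icc (0:ℝ) 1 ×ˢ Set.univ) := by
    intro i j
    exact ((hxC i j).continuousOn_fderivWithin uniqueDiffOn_S (by norm_num)).clm_comp
      continuousOn_const
  have hLc : ∀ i j : Fin 2, ContinuousOn (fun u => L i j (u, (0:ℂ))) (Set.Icc (0:ℝ) 1) := by
    intro i j
    exact (hLcont i j).comp ((continuous_id.prodMk continuous_const).continuousOn)
      (fun u hu => ⟨hu, mem_univ _⟩)
  -- compact set and bounds
  have hK : IsCompact (Set.Icc (0:ℝ) 1 ×ˢ Metric.closedBall (0:ℂ) 1) :=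
    isCompact_Icc.prod (isCompact_closedBall _ _)
  have hKS : Set.Icc (0:ℝ) 1 ×ˢ Metric.closedBall (0:ℂ) 1 ⊆ Set.Icc (0:ℝ) 1 ×ˢ Set.univ :=
    Set.prod_mono (subset_refl _) (Set.subset_univ _)
  obtain ⟨Cf, hCf0, hCf⟩ : ∃ C, 0 ≤ C ∧ ∀ u ∈ Set.Icc (0:ℝ) 1, ‖f u‖ ≤ C := by
    obtain ⟨C, hC⟩ := isCompact_Icc.exists_bound_of_continuousOn hf
    exact ⟨max C 0, le_max_right _ _, fun u hu => (hC u hu).trans (le_max_left _ _)⟩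
  obtain ⟨Cg, hCg0, hCg⟩ : ∃ C, 0 ≤ C ∧ ∀ u ∈ Set.Icc (0:ℝ) 1, ‖g u‖ ≤ C := by
    obtain ⟨C, hC⟩ := isCompact_Icc.exists_bound_of_continuousOn hg
    exact ⟨max C 0, le_max_right _ _, fun u hu => (hC u hu).trans (le_max_left _ _)⟩
  obtain ⟨CX, hCX0, hCX⟩ : ∃ C, 0 ≤ C ∧
      ∀ p ∈ Set.Icc (0:ℝ) 1 ×ˢ Metric.closedBall (0:ℂ) 1, ‖X p‖ ≤ C := by
    obtain ⟨C, hC⟩ := hK.exists_bound_of_continuousOn (hX.continuousOn.mono hKS)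
    exact ⟨max C 0, le_max_right _ _, fun p hp => (hC p hp).trans (le_max_left _ _)⟩
  obtain ⟨CL, hCL0, hCL⟩ : ∃ C, 0 ≤ C ∧ ∀ (i j : Fin 2),
      ∀ p ∈ Set.Icc (0:ℝ) 1 ×ˢ Metric.closedBall (0:ℂ) 1, ‖L i j p‖ ≤ C := by
    choose c hc using fun (i j : Fin 2) => hK.exists_bound_of_continuousOn
      ((hLcont i j).mono hKS)
    refine ⟨max (max (max (c 0 0) (c 0 1)) (max (c 1 0) (c 1 1))) 0, le_max_right _ _,
      fun i j p hp => le_trans (hc i j p hp) (le_trans ?_ (le_max_left _ _))⟩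
    fin_cases i <;> fin_cases j
    · exact le_trans (le_max_left _ _) (le_max_left _ _)
    · exact le_trans (le_max_right _ _) (le_max_left _ _)
    · exact le_trans (le_max_left _ _) (le_max_right _ _)
    · exact le_trans (le_max_right _ _) (le_max_right _ _)
  -- integral equation for the t-derivative at t = 0
  have keyInt : ∀ (i : Fin 2), ∀ s ∈ Set.Icc (0:ℝ) 1,
      (L i 0 (s, (0:ℂ)) = ∫ u in (0:ℝ)..s, g u • L i 1 (u, (0:ℂ))) ∧
      (L i 1 (s, (0:ℂ)) = ∫ u in (0:ℝ)..s,
        X (u, (0:ℂ)) i 0 • (f u • ContinuousLinearMap.id ℝ ℂ)) := by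
    intro i s hs
    have hIsub : Set.uIoc (0:ℝ) s ⊆ Set.Icc (0:ℝ) 1 := by
      rw [Set.uIoc_of_le hs.1]
      exact fun u hu => ⟨le_of_lt hu.1, le_trans hu.2 hs.2⟩
    have hsub : Set.Icc (0:ℝ) s ⊆ Set.Icc (0:ℝ) 1 := Set.Icc_subset_Icc_right hs.2
    have hKmem : ∀ (u : ℝ), u ∈ Set.uIoc (0:ℝ) s → ∀ t : ℂ, t ∈ Metric.ball (0:ℂ) 1 →
        ((u, t) : ℝ × ℂ) ∈ Set.Icc (0:ℝ) 1 ×ˢ Metric.closedBall (0:ℂ) 1 :=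
      fun u hu t ht => ⟨hIsub hu, Metric.ball_subset_closedBall ht⟩
    constructor
    · -- column 0
      have hdom := intervalIntegral.hasFDerivAt_integral_of_dominated_of_fderiv_le
        (𝕜 := ℝ) (μ := volume) (a := 0) (b := s) (x₀ := (0:ℂ)) (s := Metric.ball (0:ℂ) 1)
        (F := fun (t : ℂ) (u : ℝ) => X (u, t) i 1 * g u)
        (F' := fun (t : ℂ) (u : ℝ) => g u • L i 1 (u, t))
        (bound := fun _ => Cg * CL) (Metric.ball_mem_nhds _ one_pos)
        (Filter.Eventually.of_forall fun t =>
          (((hXcont t i 1).mono hIsub).mul (hg.mono hIsub)).aestronglyMeasurable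
            measurableSet_uIoc)
        ((((hXcont 0 i 1).mono hsub).mul (hg.mono hsub)).intervalIntegrable_of_Icc hs.1)
        (((hg.mono hIsub).smul ((hLc i 1).mono hIsub)).aestronglyMeasurable measurableSet_uIoc)
        (ae_of_all _ fun u hu t ht => by
          refine ContinuousLinearMap.opNorm_le_bound _ (by positivity) fun w => ?_
          rw [ContinuousLinearMap.smul_apply, smul_eq_mul, norm_mul]
          calc ‖g u‖ * ‖L i 1 (u, t) w‖
              ≤ Cg * (CL * ‖w‖) :=
                mul_le_mul (hCg u (hIsub hu))
                  ((L i 1 (u, t)).le_of_opNorm_le (hCL i 1 (u, t) (hKmem u hu t ht)) w)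
                  (norm_nonneg _) hCg0
            _ = Cg * CL * ‖w‖ := by ring)
        intervalIntegrable_const
        (ae_of_all _ fun u hu t ht => (hpart i 1 u (hIsub hu) t).mul_const (g u))
      have h2 := (hasFDerivAt_const ((1 : Matrix (Fin 2) (Fin 2) ℂ) i 0) (0:ℂ)).add hdom
      have h3 := h2.congr_of_eventuallyEq
        (Filter.Eventually.of_forall fun t => (ftc t i s hs).1)
      simpa using (hpart i 0 s hs 0).unique h3
    · -- column 1
      have hdom := intervalIntegral.hasFDerivAt_integral_of_dominated_of_fderiv_le
        (𝕜 := ℝ) (μ := volume) (a := 0) (b := s) (x₀ := (0:ℂ)) (s := Metric.ball (0:ℂ) 1)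
        (F := fun (t : ℂ) (u : ℝ) => X (u, t) i 0 * (t * f u))
        (F' := fun (t : ℂ) (u : ℝ) =>
          X (u, t) i 0 • (f u • ContinuousLinearMap.id ℝ ℂ) + (t * f u) • L i 0 (u, t))
        (bound := fun _ => CX * Cf + Cf * CL) (Metric.ball_mem_nhds _ one_pos)
        (Filter.Eventually.of_forall fun t =>
          (((hXcont t i 0).mono hIsub).mul
            (continuousOn_const.mul (hf.mono hIsub))).aestronglyMeasurable measurableSet_uIoc)
        ((((hXcont 0 i 0).mono hsub).mul
          (continuousOn_const.mul (hf.mono hsub))).intervalIntegrable_of_Icc hs.1)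
        (((((hXcont 0 i 0).mono hIsub).smul
            ((hf.mono hIsub).smul continuousOn_const)).add
          ((continuousOn_const.mul (hf.mono hIsub)).smul
            ((hLc i 0).mono hIsub))).aestronglyMeasurable measurableSet_uIoc)
        (ae_of_all _ fun u hu t ht => by
          have hx' : ‖X (u, t) i 0‖ ≤ CX :=
            le_trans (Matrix.norm_entry_le_entrywise_sup_norm (X (u, t)))
              (hCX (u, t) (hKmem u hu t ht))
          have ht' : ‖t‖ ≤ 1 := le_of_lt (mem_ball_zero_iff.mp ht)
          refine ContinuousLinearMap.opNorm_le_bound _ (by positivity) fun w => ?_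
          rw [ContinuousLinearMap.add_apply, ContinuousLinearMap.smul_apply,
            ContinuousLinearMap.smul_apply, ContinuousLinearMap.smul_apply,
            ContinuousLinearMap.id_apply, smul_eq_mul, smul_eq_mul, smul_eq_mul]
          calc ‖X (u, t) i 0 * (f u * w) + t * f u * L i 0 (u, t) w‖
              ≤ ‖X (u, t) i 0 * (f u * w)‖ + ‖t * f u * L i 0 (u, t) w‖ := norm_add_le _ _
            _ ≤ CX * (Cf * ‖w‖) + 1 * Cf * (CL * ‖w‖) := by
                apply add_le_add
                · rw [norm_mul, norm_mul]
                  exact mul_le_mul hx' (mul_le_mul (hCf u (hIsub hu)) le_rfl (norm_nonneg _)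
                    hCf0) (by positivity) hCX0
                · rw [norm_mul, norm_mul]
                  exact mul_le_mul (mul_le_mul ht' (hCf u (hIsub hu)) (norm_nonneg _)
                    zero_le_one)
                    ((L i 0 (u, t)).le_of_opNorm_le (hCL i 0 (u, t) (hKmem u hu t ht)) w)
                    (norm_nonneg _) (by positivity)
            _ = (CX * Cf + Cf * CL) * ‖w‖ := by ring)
        intervalIntegrable_const
        (ae_of_all _ fun u hu t ht =>
          (hpart i 0 u (hIsub hu) t).mul ((hasFDerivAt_id t).mul_const (f u)))
      have h2 := (hasFDerivAt_const ((1 : Matrix (Fin 2) (Fin 2) ℂ) i 1) (0:ℂ)).add hdom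
      have h3 := h2.congr_of_eventuallyEq
        (Filter.Eventually.of_forall fun t => (ftc t i s hs).2)
      have h4 := (hpart i 1 s hs 0).unique h3
      rw [h4, zero_add]
      refine intervalIntegral.integral_congr fun u hu => ?_
      ext w
      simp
  -- scalar form of the integral equations
  have hscal1 : ∀ (i : Fin 2), ∀ s ∈ Set.Icc (0:ℝ) 1, ∀ w : ℂ,
      L i 1 (s, (0:ℂ)) w = ∫ u in (0:ℝ)..s, X (u, (0:ℂ)) i 0 * (f u * w) := by
    intro i s hs w
    have hsub : Set.Icc (0:ℝ) s ⊆ Set.Icc (0:ℝ) 1 := Set.Icc_subset_Icc_right hs.2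
    have hint : IntervalIntegrable
        (fun u => X (u, (0:ℂ)) i 0 • (f u • ContinuousLinearMap.id ℝ ℂ)) volume 0 s :=
      (((hXcont 0 i 0).mono hsub).smul
        ((hf.mono hsub).smul continuousOn_const)).intervalIntegrable_of_Icc hs.1
    rw [(keyInt i s hs).2, ContinuousLinearMap.intervalIntegral_apply hint w]
    refine intervalIntegral.integral_congr fun u hu => ?_
    simp [mul_assoc]
  have hval01 : ∀ u ∈ Set.Icc (0:ℝ) 1, ∀ w : ℂ,
      L 0 1 (u, (0:ℂ)) w = w * ∫ v in (0:ℝ)..u, f v := by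
    intro u hu w
    rw [hscal1 0 u hu w, ← intervalIntegral.integral_const_mul]
    refine intervalIntegral.integral_congr fun v hv => ?_
    rw [Set.uIcc_of_le hu.1] at hv
    rw [hA00 v (Set.Icc_subset_Icc_right hu.2 hv)]
    ring
  have hval11 : ∀ u ∈ Set.Icc (0:ℝ) 1, ∀ w : ℂ,
      L 1 1 (u, (0:ℂ)) w = w * ∫ v in (0:ℝ)..u, f v * ∫ r in (0:ℝ)..v, g r := by
    intro u hu w
    rw [hscal1 1 u hu w, ← intervalIntegral.integral_const_mul]
    refine intervalIntegral.integral_congr fun v hv => ?_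
    rw [Set.uIcc_of_le hu.1] at hv
    rw [hA10 v (Set.Icc_subset_Icc_right hu.2 hv)]
    ring
  have hscal0 : ∀ (i : Fin 2) (w : ℂ),
      L i 0 ((1:ℝ), (0:ℂ)) w = ∫ u in (0:ℝ)..1, g u * (L i 1 (u, (0:ℂ)) w) := by
    intro i w
    have hint : IntervalIntegrable (fun u => g u • L i 1 (u, (0:ℂ))) volume 0 1 :=
      (hg.smul (hLc i 1)).intervalIntegrable_of_Icc zero_le_one
    rw [(keyInt i 1 (by norm_num)).1, ContinuousLinearMap.intervalIntegral_apply hint w]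
    refine intervalIntegral.integral_congr fun u hu => ?_
    simp
  have hfin00 : ∀ w : ℂ,
      L 0 0 ((1:ℝ), (0:ℂ)) w = w * ∫ s in (0:ℝ)..1, g s * ∫ u in (0:ℝ)..s, f u := by
    intro w
    rw [hscal0 0 w, ← intervalIntegral.integral_const_mul]
    refine intervalIntegral.integral_congr fun u hu => ?_
    rw [Set.uIcc_of_le zero_le_one] at hu
    rw [hval01 u hu w]
    ring
  have hfin10 : ∀ w : ℂ,
      L 1 0 ((1:ℝ), (0:ℂ)) w
        = w * ∫ s in (0:ℝ)..1, g s * ∫ u in (0:ℝ)..s, f u * ∫ v in (0:ℝ)..u, g v := by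
    intro w
    rw [hscal0 1 w, ← intervalIntegral.integral_const_mul]
    refine intervalIntegral.integral_congr fun u hu => ?_
    rw [Set.uIcc_of_le zero_le_one] at hu
    rw [hval11 u hu w]
    ring
  have hfin01 : ∀ w : ℂ, L 0 1 ((1:ℝ), (0:ℂ)) w = w * ∫ s in (0:ℝ)..1, f s :=
    fun w => hval01 1 (by norm_num) w
  have hfin11 : ∀ w : ℂ,
      L 1 1 ((1:ℝ), (0:ℂ)) w = w * ∫ s in (0:ℝ)..1, f s * ∫ v in (0:ℝ)..s, g v :=
    fun w => hval11 1 (by norm_num) w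
  -- from the real Fréchet derivative to the complex derivative, entrywise
  have hentry : ∀ (i j : Fin 2) (m : ℂ), (∀ w : ℂ, L i j ((1:ℝ), (0:ℂ)) w = w * m) →
      HasDerivAt (fun t : ℂ => X (1, t) i j) m 0 := by
    intro i j m hw
    have h2 := (hpart i j 1 (by norm_num : (1:ℝ) ∈ Set.Icc (0:ℝ) 1) 0).isLittleO
    rw [hasDerivAt_iff_isLittleO]
    refine h2.congr' (Filter.Eventually.of_forall fun t => ?_)
      (Filter.Eventually.of_forall fun t => rfl)
    simp only [hw, smul_eq_mul]
  have main : HasDerivAt (𝕜 := ℂ) (F := Fin 2 → Fin 2 → ℂ) (fun t : ℂ => X (1, t))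
      ![![∫ s in (0:ℝ)..1, g s * ∫ u in (0:ℝ)..s, f u, ∫ s in (0:ℝ)..1, f s],
        ![∫ s in (0:ℝ)..1, g s * ∫ u in (0:ℝ)..s, f u * ∫ v in (0:ℝ)..u, g v,
          ∫ s in (0:ℝ)..1, f s * ∫ v in (0:ℝ)..s, g v]] 0 := by
    refine hasDerivAt_pi.mpr fun i => hasDerivAt_pi.mpr fun j => ?_
    fin_cases i <;> fin_cases j
    · simpa using hentry 0 0 _ hfin00
    · simpa using hentry 0 1 _ hfin01
    · simpa using hentry 1 0 _ hfin10
    · simpa using hentry 1 1 _ hfin11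
  exact main
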